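/- Let a, m, n be positive integers with a ≥ 3 and gcd(a, n) = 1. Then g(a, ma+n, ma+2n) = ( m·⌊a/2⌋ − 1 )·a + (a−1)·n, where ⌊x⌋ denotes the greatest integer not exceeding x. -/

import Mathlib

/-- For positive integers `a, m, n` with `a ≥ 3` and `gcd(a, n) = 1`,
`g(a, m*a+n, m*a+2n) = (m*⌊a/2⌋ - 1)*a + (a-1)*n`. -/
theorem frobenius_almost_arithmetic_three (a m n : ℕ) (ha : 3 ≤ a)
    (hm : 0 < m) (hn : 0 < n) (hcop : Nat.Coprime a n) :
    IsGreatest {t : ℕ | ¬ ∃ x y z : ℕ,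
        t = x * a + y * (m * a + n) + z * (m * a + 2 * n)}
      ((m * (a / 2) - 1) * a + (a - 1) * n) := by
  have ha0 : 0 < a := by omega
  have ha2 : 1 ≤ a / 2 := by omega
  have hM : 1 ≤ m * (a / 2) := le_trans hm (Nat.le_mul_of_pos_right m ha2)
  constructor
  · -- F is not representable
    simp only [Set.mem_setOf_eq]
    rintro ⟨x, y, z, hxyz⟩
    set K := x + m * (y + z) with hK
    set S := y + 2 * z with hS
    have hF : K * a + S * n = (m * (a / 2) - 1) * a + (a - 1) * n := by
      rw [hxyz]; ring
    -- congruence mod a : S * n ≡ (a-1) * n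
    have hcong : S * n ≡ (a - 1) * n [MOD a] := by
      have h1 : K * a + S * n ≡ S * n [MOD a] := by
        simpa using (Nat.ModEq.add_right (S * n)
          ((Nat.modEq_zero_iff_dvd).2 ⟨K, by ring⟩))
      have h2 : (m * (a / 2) - 1) * a + (a - 1) * n ≡ (a - 1) * n [MOD a] := by
        simpa using (Nat.ModEq.add_right ((a - 1) * n)
          ((Nat.modEq_zero_iff_dvd).2 ⟨m * (a / 2) - 1, by ring⟩))
      exact h1.symm.trans (hF ▸ h2)
    have hSmod : S ≡ a - 1 [MOD a] := Nat.ModEq.cancel_right_of_coprime hcop hcong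
    have hSge : a - 1 ≤ S := by
      have h1 : S % a = (a - 1) % a := hSmod
      have h2 : (a - 1) % a = a - 1 := Nat.mod_eq_of_lt (by omega)
      have h3 : S % a ≤ S := Nat.mod_le S a
      omega
    -- K ≥ m * (a/2)
    have hyz : a / 2 ≤ y + z := by omega
    have hKge : m * (a / 2) ≤ K := by
      calc m * (a / 2) ≤ m * (y + z) := Nat.mul_le_mul_left m hyz
        _ ≤ K := by omega
    -- contradiction
    have h1 : m * (a / 2) * a ≤ K * a := Nat.mul_le_mul_right a hKge
    have h2 : (a - 1) * n ≤ S * n := Nat.mul_le_mul_right n hSge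
    have h3 : (m * (a / 2) - 1) * a + a = m * (a / 2) * a := by
      have := Nat.succ_pred_eq_of_pos hM
      calc (m * (a / 2) - 1) * a + a = (m * (a / 2) - 1 + 1) * a := by ring
        _ = m * (a / 2) * a := by rw [Nat.sub_add_cancel hM]
    omega
  · -- upper bound
    intro t ht
    simp only [Set.mem_setOf_eq] at ht
    by_contra hlt
    push_neg at hlt
    -- hlt : F < t
    apply ht
    obtain ⟨u, -, hu⟩ := Nat.exists_mul_mod_eq_one_of_coprime hcop.symm (by omega)
    set s := t * u % a with hs
    have hsa : s < a := Nat.mod_lt _ ha0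
    have hcong : s * n ≡ t [MOD a] := by
      calc s * n ≡ t * u * n [MOD a] := Nat.ModEq.mul_right n (Nat.mod_modEq (t * u) a)
        _ = t * (n * u) := by ring
        _ ≡ t * 1 [MOD a] := Nat.ModEq.mul_left t (show n * u ≡ 1 [MOD a] by
              unfold Nat.ModEq; simp [hu, Nat.mod_eq_of_lt (show 1 < a by omega)])
        _ = t := by ring
    have hsn : (a - 1) * n ≤ (m * (a / 2) - 1) * a + (a - 1) * n := Nat.le_add_left _ _
    have hsle : s * n ≤ t := by
      have h1 : s * n ≤ (a - 1) * n := Nat.mul_le_mul_right n (by omega)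
      omega
    have hdvd : a ∣ t - s * n := (Nat.modEq_iff_dvd' hsle).1 hcong
    obtain ⟨k, hk⟩ := hdvd
    have htk : t = a * k + s * n := by omega
    -- k ≥ m * (a/2)
    have h3 : (m * (a / 2) - 1) * a + a = m * (a / 2) * a := by
      calc (m * (a / 2) - 1) * a + a = (m * (a / 2) - 1 + 1) * a := by ring
        _ = m * (a / 2) * a := by rw [Nat.sub_add_cancel hM]
    have hka : (m * (a / 2) - 1) * a < k * a := by
      have h1 : s * n ≤ (a - 1) * n := Nat.mul_le_mul_right n (by omega)
      have h2 : (m * (a / 2) - 1) * a + (a - 1) * n < a * k + s * n := htk ▸ hlt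
      have h4 : a * k = k * a := Nat.mul_comm a k
      omega
    have hkge : m * (a / 2) ≤ k := by
      have := Nat.lt_of_mul_lt_mul_right hka
      omega
    have hhalf : s % 2 + s / 2 ≤ a / 2 := by omega
    have hxle : m * (s % 2 + s / 2) ≤ k :=
      le_trans (Nat.mul_le_mul_left m hhalf) hkge
    refine ⟨k - m * (s % 2 + s / 2), s % 2, s / 2, ?_⟩
    have h2 : s % 2 + 2 * (s / 2) = s := by omega
    have expand : (k - m * (s % 2 + s / 2)) * a + s % 2 * (m * a + n) + s / 2 * (m * a + 2 * n)
        = (k - m * (s % 2 + s / 2) + m * (s % 2 + s / 2)) * a + (s % 2 + 2 * (s / 2)) * n := by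
      ring
    rw [expand, Nat.sub_add_cancel hxle, h2, htk]
    ring
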